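/- A morphism of perfect complexes of abelian groups f : X → Y is a quasi-isomorphism if and only if X ⊗^L ℤ/m → Y ⊗^L ℤ/m is a quasi-isomorphism for every positive integer m. -/

import Mathlib

/-!
STATEMENT 12: A morphism of perfect complexes of abelian groups `f : X → Y`
is a quasi-isomorphism if and only if `X ⊗^L ℤ/m → Y ⊗^L ℤ/m` is a
quasi-isomorphism for every positive integer `m`.

We take perfect complexes to be bounded complexes of finitely generated free
abelian groups (every perfect complex is quasi-isomorphic to such a complex),
and realize `X ⊗^L ℤ/m` as the cofiber (mapping cone) of multiplication by
`m` on `X`.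
-/

open CategoryTheory CochainComplex

/-- `X ⊗^L ℤ/m`, realized as the mapping cone of multiplication by `m`. -/
noncomputable def modM (X : CochainComplex AddCommGrpCat ℤ) (m : ℕ) :
    CochainComplex AddCommGrpCat ℤ :=
  mappingCone ((m : ℤ) • 𝟙 X)

/-- The morphism `X ⊗^L ℤ/m → Y ⊗^L ℤ/m` induced by `f : X ⟶ Y`. -/
noncomputable def modMMap {X Y : CochainComplex AddCommGrpCat ℤ} (f : X ⟶ Y)
    (m : ℕ) : modM X m ⟶ modM Y m :=
  mappingCone.map _ _ f f (by simp)

namespace ModMAux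

open HomotopyCategory Pretriangulated

/-! ### Algebraic lemmas on finitely generated abelian groups -/

lemma subsingleton_of_fg_divisible (A : Type*) [AddCommGroup A] (hfg : AddGroup.FG A)
    (hdiv : ∀ m : ℕ, 0 < m → ∀ a : A, ∃ b : A, m • b = a) : Subsingleton A := by
  obtain ⟨n, ι, fι, p, hp, e, ⟨f⟩⟩ := AddCommGroup.equiv_free_prod_directSum_zmod A
  have hdiv' : ∀ m : ℕ, 0 < m → ∀ x : ((Fin n →₀ ℤ) × DirectSum ι fun i => ZMod (p i ^ e i)),
      ∃ y, m • y = x := by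
    intro m hm x
    obtain ⟨b, hb⟩ := hdiv m hm (f.symm x)
    exact ⟨f b, by rw [← map_nsmul, hb, f.apply_symm_apply]⟩
  classical
  have he : ∀ i, e i = 0 := by
    intro i
    by_contra hei
    have hq : 1 < p i ^ e i := Nat.one_lt_pow hei (hp i).one_lt
    obtain ⟨y, hy⟩ := hdiv' (p i ^ e i) (by omega) (0, DirectSum.of (fun i => ZMod (p i ^ e i)) i 1)
    have := congrArg (fun z => z.2 i) hy
    simp only [Prod.smul_snd] at this
    rw [DirectSum.of_eq_same] at this
    have h0 : ((p i ^ e i : ℕ) • (y.2 i) : ZMod (p i ^ e i)) = 0 := by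
      have : ((p i ^ e i : ℕ) : ZMod (p i ^ e i)) = 0 := ZMod.natCast_self _
      rw [nsmul_eq_mul, this, zero_mul]
    rw [DFinsupp.smul_apply] at this
    rw [h0] at this
    haveI hf : Fact (1 < p i ^ e i) := ⟨hq⟩
    exact zero_ne_one this
  refine subsingleton_of_forall_eq 0 (fun a => ?_)
  have : f a = 0 := by
    have hu : (f a).1 = 0 := by
      ext j
      have hd : ∀ m : ℕ, 0 < m → (m : ℤ) ∣ (f a).1 j := by
        intro m hm
        obtain ⟨y, hy⟩ := hdiv' m hm (f a)
        refine ⟨y.1 j, ?_⟩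
        have := congrArg (fun z => z.1 j) hy
        simp only [Prod.smul_fst, Finsupp.smul_apply] at this
        rw [← this]
        simp [nsmul_eq_mul]
      by_contra hne
      have h1 := hd ((f a).1 j).natAbs.succ (Nat.succ_pos _)
      have h2 : (((f a).1 j).natAbs.succ : ℤ) ∣ |(f a).1 j| := (dvd_abs _ _).mpr h1
      have h3 := Int.le_of_dvd (abs_pos.mpr (by simpa using hne)) h2
      rw [Int.abs_eq_natAbs] at h3
      omega
    have hv : (f a).2 = 0 := by
      refine DFunLike.ext _ _ fun i => ?_
      haveI : Subsingleton (ZMod (p i ^ e i)) := by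
        rw [he i, pow_zero]; infer_instance
      exact Subsingleton.elim _ _
    exact Prod.ext hu hv
  simpa using congrArg f.symm this

lemma injective_of_fg_cond {A B : Type*} [AddCommGroup A] [AddCommGroup B]
    (hfg : AddGroup.FG A) (φ : A →+ B)
    (h : ∀ m : ℕ, 0 < m → ∀ a : A, φ a = 0 → ∃ b : A, φ b = 0 ∧ m • b = a) :
    Function.Injective φ := by
  haveI : Module.Finite ℤ A := Module.Finite.iff_addGroup_fg.mpr hfg
  set K : Submodule ℤ A := LinearMap.ker φ.toIntLinearMap with hK
  have hKfg : AddGroup.FG K := by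
    rw [← Module.Finite.iff_addGroup_fg]
    exact Module.Finite.iff_fg.mpr (IsNoetherian.noetherian K)
  haveI : Subsingleton K := by
    refine subsingleton_of_fg_divisible _ hKfg ?_
    rintro m hm ⟨a, ha⟩
    obtain ⟨b, hb0, hb⟩ := h m hm a ha
    exact ⟨⟨b, hb0⟩, Subtype.ext (by simpa using hb)⟩
  intro a b hab
  have : a - b ∈ K := by
    rw [hK, LinearMap.mem_ker]
    simp only [AddMonoidHom.coe_toIntLinearMap, map_sub, hab, sub_self]
  have h0 : ((⟨a - b, this⟩ : K) : A) = ((0 : K) : A) := by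
    rw [Subsingleton.elim (⟨a - b, this⟩ : K) 0]
  simp only [ZeroMemClass.coe_zero] at h0
  exact sub_eq_zero.mp h0

lemma surjective_of_fg_cond {A B : Type*} [AddCommGroup A] [AddCommGroup B]
    (hfg : AddGroup.FG B) (φ : A →+ B)
    (h : ∀ m : ℕ, 0 < m → ∀ b : B, ∃ a : A, ∃ c : B, b = φ a + m • c) :
    Function.Surjective φ := by
  haveI : Module.Finite ℤ B := Module.Finite.iff_addGroup_fg.mpr hfg
  set R : Submodule ℤ B := LinearMap.range φ.toIntLinearMap with hR
  haveI : Subsingleton (B ⧸ R) := by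
    refine subsingleton_of_fg_divisible _ ?_ ?_
    · rw [← Module.Finite.iff_addGroup_fg]
      infer_instance
    · intro m hm q
      obtain ⟨b, rfl⟩ := Submodule.mkQ_surjective R q
      obtain ⟨a, c, hc⟩ := h m hm b
      refine ⟨R.mkQ c, ?_⟩
      have h1 : R.mkQ (φ a) = 0 := (Submodule.Quotient.mk_eq_zero _).mpr ⟨a, rfl⟩
      rw [← map_nsmul, hc, map_add, h1, zero_add]
  intro b
  have hb : b ∈ R := by
    rw [← Submodule.Quotient.mk_eq_zero]
    exact Subsingleton.elim _ _
  exact hb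

/-! ### Homological infrastructure -/

noncomputable abbrev FF : HomotopyCategory AddCommGrpCat (ComplexShape.up ℤ) ⥤ AddCommGrpCat :=
  HomotopyCategory.homologyFunctor AddCommGrpCat (ComplexShape.up ℤ) 0

local notation "Q" => HomotopyCategory.quotient AddCommGrpCat (ComplexShape.up ℤ)

lemma quasiIso_iff_forall {X Y : CochainComplex AddCommGrpCat ℤ} (f : X ⟶ Y) :
    QuasiIso f ↔ ∀ n : ℤ, IsIso ((FF.shift n).map ((Q).map f)) := by
  rw [quasiIso_iff]
  have : ∀ n : ℤ, QuasiIsoAt f n ↔ IsIso ((FF.shift n).map ((Q).map f)) := by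
    intro n
    rw [quasiIsoAt_iff_isIso_homologyMap]
    have h := NatIso.isIso_map_iff
      (HomotopyCategory.homologyFunctorFactors AddCommGrpCat (ComplexShape.up ℤ) n) f
    constructor
    · intro hh; exact h.mpr hh
    · intro hh; exact h.mp hh
  exact ⟨fun h n => (this n).mp (h n), fun h n => (this n).mpr (h n)⟩

lemma fg_addSubgroup' {M : Type*} [AddCommGroup M] [Module.Finite ℤ M] (K : AddSubgroup M) :
    AddGroup.FG K := by
  have : Module.Finite ℤ K.toIntSubmodule :=
    Module.Finite.iff_fg.mpr (IsNoetherian.noetherian K.toIntSubmodule)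
  exact Module.Finite.iff_addGroup_fg.mp this

lemma fg_shift_homology (X : CochainComplex AddCommGrpCat ℤ) (hX : ∀ n, Module.Finite ℤ (X.X n))
    (n : ℤ) : AddGroup.FG ((FF.shift n).obj ((Q).obj X)) := by
  haveI : Module.Finite ℤ ((X.sc n).X₂) := hX n
  have h1 : AddGroup.FG (AddMonoidHom.ker (X.sc n).g.hom) := fg_addSubgroup' _
  have h2 : AddGroup.FG ((AddMonoidHom.ker (X.sc n).g.hom) ⧸ AddMonoidHom.range (X.sc n).abToCycles) :=
    AddGroup.fg_of_surjective (QuotientAddGroup.mk'_surjective _)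
  have e : AddCommGrpCat.of ((AddMonoidHom.ker (X.sc n).g.hom) ⧸ AddMonoidHom.range (X.sc n).abToCycles)
      ≅ (FF.shift n).obj ((Q).obj X) :=
    ((X.sc n).abHomologyIso).symm ≪≫
      ((homologyFunctorFactors AddCommGrpCat (ComplexShape.up ℤ) n).app X).symm
  exact @AddGroup.fg_of_surjective _ _ _ _ h2 e.hom.hom ((ConcreteCategory.bijective_of_isIso e.hom).2)

section

variable {X Y : CochainComplex AddCommGrpCat ℤ} (f : X ⟶ Y) (m : ℕ)

/-- The triangle `X → X → X ⊗^L ℤ/m` in the homotopy category. -/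
noncomputable def TT (X : CochainComplex AddCommGrpCat ℤ) (m : ℕ) :=
  mappingCone.triangleh ((m : ℤ) • 𝟙 X)

lemma hTT : TT X m ∈ distTriang (HomotopyCategory AddCommGrpCat (ComplexShape.up ℤ)) :=
  HomotopyCategory.mappingCone_triangleh_distinguished _

/-- The triangle morphism `TT X m ⟶ TT Y m` induced by `f`. -/
noncomputable def Tmap : TT X m ⟶ TT Y m :=
  (Q).mapTriangle.map (mappingCone.triangleMap _ _ f f (by simp))

lemma mor₁_eq (n : ℤ) : (FF.shift n).map (TT X m).mor₁ =
    (m : ℤ) • 𝟙 ((FF.shift n).obj ((Q).obj X)) := by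
  have : (TT X m).mor₁ = (m : ℤ) • 𝟙 ((Q).obj X) := by
    show (Q).map ((m : ℤ) • 𝟙 X) = _
    rw [Functor.map_zsmul, CategoryTheory.Functor.map_id]
  erw [this, Functor.map_zsmul]
  congr 1
  exact CategoryTheory.Functor.map_id _ _

lemma mor₁_apply (n : ℤ) (x : (FF.shift n).obj ((Q).obj X)) :
    ((FF.shift n).map (TT X m).mor₁) x = m • x := by
  rw [mor₁_eq]
  show (m : ℤ) • x = m • x
  rw [natCast_zsmul]

lemma E1 (n : ℤ) (x : (FF.shift n).obj ((Q).obj X))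
    (hx : ((FF.shift n).map (TT X m).mor₂) x = 0) :
    ∃ a : (FF.shift n).obj ((Q).obj X), m • a = x := by
  have hex := (FF.homologySequence_exact₂ _ (hTT (X := X) (m := m)) n)
  rw [ShortComplex.ab_exact_iff] at hex
  obtain ⟨a, ha⟩ := hex x hx
  exact ⟨a, by erw [← mor₁_apply]; exact ha⟩

lemma E2 (n₀ n₁ : ℤ) (hn : n₀ + 1 = n₁) (h : (FF.shift n₀).obj ((Q).obj (modM X m)))
    (hh : (FF.homologySequenceδ (TT X m) n₀ n₁ hn) h = 0) :
    ∃ a, ((FF.shift n₀).map (TT X m).mor₂) a = h := by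
  have hex := (FF.homologySequence_exact₃ _ (hTT (X := X) (m := m)) n₀ n₁ hn)
  rw [ShortComplex.ab_exact_iff] at hex
  exact hex h hh

lemma E3 (n₀ n₁ : ℤ) (hn : n₀ + 1 = n₁) (x : (FF.shift n₁).obj ((Q).obj X)) (hx : m • x = 0) :
    ∃ h, (FF.homologySequenceδ (TT X m) n₀ n₁ hn) h = x := by
  have hex := (FF.homologySequence_exact₁ _ (hTT (X := X) (m := m)) n₀ n₁ hn)
  rw [ShortComplex.ab_exact_iff] at hex
  refine hex x ?_
  show ((FF.shift n₁).map (TT X m).mor₁) x = 0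
  erw [mor₁_apply, hx]; rfl

lemma E4 (n₀ n₁ : ℤ) (hn : n₀ + 1 = n₁) (h : (FF.shift n₀).obj ((Q).obj (modM X m))) :
    m • (FF.homologySequenceδ (TT X m) n₀ n₁ hn) h = 0 := by
  have h1 := FF.homologySequenceδ_comp _ (hTT (X := X) (m := m)) n₀ n₁ hn
  have h2 := ConcreteCategory.congr_hom h1 h
  erw [comp_apply] at h2
  erw [mor₁_apply] at h2
  exact h2

lemma E5 (n : ℤ) (a : (FF.shift n).obj ((Q).obj X)) :
    ((FF.shift n).map (TT X m).mor₂) (m • a) = 0 := by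
  have h1 := FF.homologySequence_comp _ (hTT (X := X) (m := m)) n
  have h2 := ConcreteCategory.congr_hom h1 a
  erw [comp_apply, mor₁_apply] at h2
  exact h2

lemma E6 (n₀ n₁ : ℤ) (hn : n₀ + 1 = n₁) (a : (FF.shift n₀).obj ((Q).obj X)) :
    (FF.homologySequenceδ (TT X m) n₀ n₁ hn) (((FF.shift n₀).map (TT X m).mor₂) a) = 0 := by
  have h1 := FF.comp_homologySequenceδ _ (hTT (X := X) (m := m)) n₀ n₁ hn
  have h2 := ConcreteCategory.congr_hom h1 a
  erw [comp_apply] at h2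
  exact h2

lemma C1 (n : ℤ) (a : (FF.shift n).obj ((Q).obj X)) :
    ((FF.shift n).map ((Q).map (modMMap f m))) (((FF.shift n).map (TT X m).mor₂) a) =
      ((FF.shift n).map (TT Y m).mor₂) (((FF.shift n).map ((Q).map f)) a) := by
  have hc := (Tmap f m).comm₂
  have h2 := ConcreteCategory.congr_hom (congrArg (FF.shift n).map hc) a
  rw [CategoryTheory.Functor.map_comp, CategoryTheory.Functor.map_comp] at h2
  erw [comp_apply, comp_apply] at h2
  exact h2

lemma C2 (n₀ n₁ : ℤ) (hn : n₀ + 1 = n₁) (h : (FF.shift n₀).obj ((Q).obj (modM X m))) :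
    ((FF.shift n₁).map ((Q).map f)) ((FF.homologySequenceδ (TT X m) n₀ n₁ hn) h) =
      (FF.homologySequenceδ (TT Y m) n₀ n₁ hn)
        (((FF.shift n₀).map ((Q).map (modMMap f m))) h) := by
  have h1 := FF.homologySequenceδ_naturality (TT X m) (TT Y m) (Tmap f m) n₀ n₁ hn
  have h2 := ConcreteCategory.congr_hom h1 h
  erw [comp_apply, comp_apply] at h2
  exact h2.symm

end

end ModMAux

open ModMAux HomotopyCategory in
theorem quasiIso_iff_quasiIso_modM
    (X Y : CochainComplex AddCommGrpCat ℤ) (f : X ⟶ Y)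
    -- `X` and `Y` are bounded complexes of finitely generated free abelian groups
    (hXb : ∃ a b : ℤ, ∀ n, (n < a ∨ b < n) → Subsingleton (X.X n))
    (hYb : ∃ a b : ℤ, ∀ n, (n < a ∨ b < n) → Subsingleton (Y.X n))
    (hXfree : ∀ n, Module.Free ℤ (X.X n)) (hXfg : ∀ n, Module.Finite ℤ (X.X n))
    (hYfree : ∀ n, Module.Free ℤ (Y.X n)) (hYfg : ∀ n, Module.Finite ℤ (Y.X n)) :
    QuasiIso f ↔ ∀ m : ℕ, 0 < m → QuasiIso (modMMap f m) := by
  constructor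
  · -- forward direction: five lemma
    intro hf m hm
    rw [quasiIso_iff_forall] at hf
    have hφ : ∀ k : ℤ, Function.Bijective
        ((FF.shift k).map ((HomotopyCategory.quotient _ _).map f)) :=
      fun k => (ConcreteCategory.isIso_iff_bijective _).mp (hf k)
    rw [quasiIso_iff_forall]
    intro n
    rw [ConcreteCategory.isIso_iff_bijective]
    constructor
    · -- injectivity of ι
      refine (injective_iff_map_eq_zero _).mpr fun h hh => ?_
      have h1 : ((FF.shift (n+1)).map ((HomotopyCategory.quotient _ _).map f))
          ((FF.homologySequenceδ (TT X m) n (n+1) rfl) h) = 0 := by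
        erw [C2 f m n (n+1) rfl h, hh, map_zero]; rfl
      have h2 : (FF.homologySequenceδ (TT X m) n (n+1) rfl) h = 0 :=
        (hφ (n+1)).1 (by erw [h1, map_zero])
      obtain ⟨a, ha⟩ := E2 m n (n+1) rfl h h2
      have h3 : ((FF.shift n).map (TT Y m).mor₂)
          (((FF.shift n).map ((HomotopyCategory.quotient _ _).map f)) a) = 0 := by
        erw [← C1 f m n a, ha, hh]; rfl
      obtain ⟨b', hb'⟩ := E1 (X := Y) m n _ h3
      obtain ⟨a'', ha''⟩ := (hφ n).2 b'
      have h4 : a = m • a'' := by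
        apply (hφ n).1
        rw [map_nsmul, ha'', hb']
      rw [← ha, h4]
      exact E5 m n a''
    · -- surjectivity of ι
      intro h'
      obtain ⟨s, hs⟩ := (hφ (n+1)).2 ((FF.homologySequenceδ (TT Y m) n (n+1) rfl) h')
      have h1 : m • s = 0 := by
        apply (hφ (n+1)).1
        erw [map_nsmul, hs, map_zero, E4 (X := Y) m n (n+1) rfl h']; rfl
      obtain ⟨hx, hhx⟩ := E3 (X := X) m n (n+1) rfl s h1
      have h2 : (FF.homologySequenceδ (TT Y m) n (n+1) rfl)
          (h' - ((FF.shift n).map ((HomotopyCategory.quotient _ _).map (modMMap f m))) hx) = 0 := by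
        erw [map_sub, ← C2 f m n (n+1) rfl hx, hhx, hs, sub_self]
      obtain ⟨b, hb⟩ := E2 (X := Y) m n (n+1) rfl _ h2
      obtain ⟨a, hab⟩ := (hφ n).2 b
      refine ⟨hx + ((FF.shift n).map (TT X m).mor₂) a, ?_⟩
      show ((FF.shift n).map ((HomotopyCategory.quotient _ _).map (modMMap f m)))
        (hx + ((FF.shift n).map (TT X m).mor₂) a) = h'
      erw [map_add, C1 f m n a, hab, hb]
      abel
  · -- backward direction
    intro hmod
    have hι : ∀ m : ℕ, 0 < m → ∀ k : ℤ, Function.Bijective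
        ((FF.shift k).map ((HomotopyCategory.quotient _ _).map (modMMap f m))) := by
      intro m hm k
      have := (quasiIso_iff_forall (modMMap f m)).mp (hmod m hm) k
      exact (ConcreteCategory.isIso_iff_bijective _).mp this
    have hinj : ∀ k : ℤ, Function.Injective
        ((FF.shift k).map ((HomotopyCategory.quotient _ _).map f)) := by
      intro k
      refine injective_of_fg_cond (fg_shift_homology X hXfg k) _ ?_
      intro m hm a ha
      have hc1 := C1 f m k a
      erw [ha, map_zero] at hc1
      have h1 : ((FF.shift k).map (TT X m).mor₂) a = 0 := (hι m hm k).1 (by erw [hc1, map_zero]; rfl)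
      obtain ⟨a₀, ha₀⟩ := E1 m k a h1
      have h2 : m • (((FF.shift k).map ((HomotopyCategory.quotient _ _).map f)) a₀) = 0 := by
        rw [← map_nsmul, ha₀, ha]
      have hk : k - 1 + 1 = k := by omega
      obtain ⟨h', hh'⟩ := E3 (X := Y) m (k-1) k hk _ h2
      obtain ⟨hx, hhx⟩ := (hι m hm (k-1)).2 h'
      obtain ⟨s, hs⟩ : ∃ s : ((FF.shift k).obj
          ((HomotopyCategory.quotient AddCommGrpCat (ComplexShape.up ℤ)).obj X)),
          s = (FF.homologySequenceδ (TT X m) (k-1) k hk) hx := ⟨_, rfl⟩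
      have h3 : ((FF.shift k).map ((HomotopyCategory.quotient _ _).map f)) s =
          ((FF.shift k).map ((HomotopyCategory.quotient _ _).map f)) a₀ := by
        rw [hs, C2 f m (k-1) k hk hx, hhx, hh']
      have h4 : m • s = 0 := by rw [hs]; exact E4 m (k-1) k hk hx
      refine ⟨a₀ - s, ?_, ?_⟩
      · rw [map_sub, h3, sub_self]
      · rw [smul_sub, h4, sub_zero, ha₀]
    rw [quasiIso_iff_forall]
    intro n
    rw [ConcreteCategory.isIso_iff_bijective]
    refine ⟨hinj n, ?_⟩
    refine surjective_of_fg_cond (fg_shift_homology Y hYfg n) _ ?_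
    intro m hm b
    obtain ⟨h, hh⟩ := (hι m hm n).2 (((FF.shift n).map (TT Y m).mor₂) b)
    have h5 : ((FF.shift (n+1)).map ((HomotopyCategory.quotient _ _).map f))
        ((FF.homologySequenceδ (TT X m) n (n+1) rfl) h) = 0 := by
      rw [C2 f m n (n+1) rfl h, hh]
      exact E6 (X := Y) m n (n+1) rfl b
    have h6 : (FF.homologySequenceδ (TT X m) n (n+1) rfl) h = 0 :=
      hinj (n+1) (by erw [h5, map_zero])
    obtain ⟨a, hab⟩ := E2 m n (n+1) rfl h h6
    have h7 : ((FF.shift n).map (TT Y m).mor₂)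
        (b - ((FF.shift n).map ((HomotopyCategory.quotient _ _).map f)) a) = 0 := by
      erw [map_sub, ← C1 f m n a, hab, hh, sub_self]
    obtain ⟨c, hc⟩ := E1 (X := Y) m n _ h7
    exact ⟨a, c, by rw [hc]; abel⟩
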